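/- arXiv:1309.6136 — 3 statements merged into one kernel-verified Lean document; each statement's English description precedes it below -/
import Mathlib

section
/- For any constants a, b ∈ (0,1), ρ ∈ [0,1), and w > 0, the double integral ∫₀^∞ ∫₀^∞ exp( -((w/s)² + (w/t)²)/(2(1+ρ)) - s - t ) ds dt is at most (1/((1-a)(1-b))) · exp( -(3/2)(a^{2/3} + b^{2/3}) (1+ρ)^{-1/3} w^{2/3} ). -/
open Real MeasureTheory

-- ∫_{Ioi 0} exp(-(c x)) dx = 1/c
lemma exp_int {c : ℝ} (hc : 0 < c) :
    ∫ x in Set.Ioi (0:ℝ), Real.exp (-(c * x)) = 1 / c := by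
  have := integral_comp_mul_left_Ioi (fun x => Real.exp (-x)) 0 hc
  simp only [mul_zero] at this
  rw [this, integral_exp_neg_Ioi_zero, smul_eq_mul, mul_one, one_div]

-- key pointwise AM-GM bound
lemma key_bound {c ρ w : ℝ} (hc : 0 < c) (hρ : 0 ≤ ρ) (hw : 0 < w) {s : ℝ} (hs : 0 < s) :
    (3/2) * c ^ ((2:ℝ)/3) * (1+ρ) ^ (-(1:ℝ)/3) * w ^ ((2:ℝ)/3)
      ≤ (w / s) ^ 2 / (2 * (1 + ρ)) + c * s := by
  have hρ' : (0:ℝ) < 1 + ρ := by linarith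
  set u : ℝ := (w / s) ^ 2 / (2 * (1 + ρ)) with hu
  set v : ℝ := c * s / 2 with hv
  have hupos : 0 < u := by positivity
  have hvpos : 0 < v := by positivity
  have h3 := Real.geom_mean_le_arith_mean3_weighted (by norm_num : (0:ℝ) ≤ 1/3)
    (by norm_num : (0:ℝ) ≤ 1/3) (by norm_num : (0:ℝ) ≤ 1/3)
    hupos.le hvpos.le hvpos.le (by norm_num)
  have hprod : u ^ ((1:ℝ)/3) * v ^ ((1:ℝ)/3) * v ^ ((1:ℝ)/3)
      = (1/2) * c ^ ((2:ℝ)/3) * (1+ρ) ^ (-(1:ℝ)/3) * w ^ ((2:ℝ)/3) := by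
    rw [← Real.mul_rpow hupos.le hvpos.le, ← Real.mul_rpow (by positivity) hvpos.le]
    have : u * v * v = w ^ 2 * c ^ 2 / (8 * (1 + ρ)) := by
      rw [hu, hv]; field_simp; ring
    rw [this]
    rw [show w ^ 2 * c ^ 2 / (8 * (1 + ρ)) = (w^2) * (c^2) * ((8:ℝ))⁻¹ * ((1+ρ))⁻¹ by
      field_simp]
    rw [Real.mul_rpow (by positivity) (by positivity),
        Real.mul_rpow (by positivity) (by positivity),
        Real.mul_rpow (by positivity) (by positivity)]
    have h8 : ((8:ℝ)⁻¹) ^ ((1:ℝ)/3) = 1/2 := by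
      rw [show ((8:ℝ)⁻¹) = ((1/2:ℝ)) ^ (3:ℕ) by norm_num, ← Real.rpow_natCast,
        ← Real.rpow_mul (by norm_num)]
      norm_num
    have hw2 : (w ^ 2) ^ ((1:ℝ)/3) = w ^ ((2:ℝ)/3) := by
      rw [← Real.rpow_natCast w 2, ← Real.rpow_mul hw.le]; norm_num
    have hc2 : (c ^ 2) ^ ((1:ℝ)/3) = c ^ ((2:ℝ)/3) := by
      rw [← Real.rpow_natCast c 2, ← Real.rpow_mul hc.le]; norm_num
    have hρ2 : ((1+ρ)⁻¹) ^ ((1:ℝ)/3) = (1+ρ) ^ (-(1:ℝ)/3) := by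
      rw [← Real.rpow_neg_one (1+ρ), ← Real.rpow_mul hρ'.le]; norm_num
    rw [hw2, hc2, hρ2, h8]; ring
  have : (1:ℝ)/3 * u + 1/3 * v + 1/3 * v ≤ u + c * s := by
    rw [hv]; linarith [hupos]
  calc (3/2) * c ^ ((2:ℝ)/3) * (1+ρ) ^ (-(1:ℝ)/3) * w ^ ((2:ℝ)/3)
      = 3 * (u ^ ((1:ℝ)/3) * v ^ ((1:ℝ)/3) * v ^ ((1:ℝ)/3)) := by rw [hprod]; ring
    _ ≤ 3 * ((1:ℝ)/3 * u + 1/3 * v + 1/3 * v) := by linarith [h3]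
    _ = u + v + v := by ring
    _ ≤ u + c * s := by rw [hv]; linarith

set_option maxHeartbeats 1000000 in
theorem stmt_1 (a b ρ w : ℝ) (ha : a ∈ Set.Ioo (0:ℝ) 1) (hb : b ∈ Set.Ioo (0:ℝ) 1)
    (hρ0 : 0 ≤ ρ) (hρ1 : ρ < 1) (hw : 0 < w) :
    (∫ s in Set.Ioi (0:ℝ), ∫ t in Set.Ioi (0:ℝ),
        Real.exp (-((w / s) ^ 2 + (w / t) ^ 2) / (2 * (1 + ρ)) - s - t)) ≤
      (1 / ((1 - a) * (1 - b))) *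
        Real.exp (-(3 / 2) * (a ^ ((2:ℝ)/3) + b ^ ((2:ℝ)/3)) * (1 + ρ) ^ (-(1:ℝ)/3) *
          w ^ ((2:ℝ)/3)) := by
  obtain ⟨ha0, ha1⟩ := ha
  obtain ⟨hb0, hb1⟩ := hb
  have h1a : (0:ℝ) < 1 - a := by linarith
  have h1b : (0:ℝ) < 1 - b := by linarith
  set Ea : ℝ := Real.exp (-(3/2) * a ^ ((2:ℝ)/3) * (1+ρ) ^ (-(1:ℝ)/3) * w ^ ((2:ℝ)/3))
  set Eb : ℝ := Real.exp (-(3/2) * b ^ ((2:ℝ)/3) * (1+ρ) ^ (-(1:ℝ)/3) * w ^ ((2:ℝ)/3))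
  have hEa : 0 < Ea := Real.exp_pos _
  have hEb : 0 < Eb := Real.exp_pos _
  -- pointwise bound
  have hpt : ∀ s ∈ Set.Ioi (0:ℝ), ∀ t ∈ Set.Ioi (0:ℝ),
      Real.exp (-((w / s) ^ 2 + (w / t) ^ 2) / (2 * (1 + ρ)) - s - t)
        ≤ Ea * Eb * (Real.exp (-((1-a) * s)) * Real.exp (-((1-b) * t))) := by
    intro s hs t ht
    have hs' : 0 < s := hs
    have ht' : 0 < t := ht
    have k1 := key_bound ha0 hρ0 hw hs'
    have k2 := key_bound hb0 hρ0 hw ht'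
    rw [show Ea * Eb * (Real.exp (-((1-a) * s)) * Real.exp (-((1-b) * t)))
        = Real.exp ((-(3/2) * a ^ ((2:ℝ)/3) * (1+ρ) ^ (-(1:ℝ)/3) * w ^ ((2:ℝ)/3) - (1-a)*s)
          + (-(3/2) * b ^ ((2:ℝ)/3) * (1+ρ) ^ (-(1:ℝ)/3) * w ^ ((2:ℝ)/3) - (1-b)*t)) by
      rw [Real.exp_add, Real.exp_sub, Real.exp_sub, Real.exp_neg, Real.exp_neg]; ring]
    apply Real.exp_le_exp.mpr
    have : -((w / s) ^ 2 + (w / t) ^ 2) / (2 * (1 + ρ)) - s - t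
        = (-((w/s)^2/(2*(1+ρ)) + a*s) - (1-a)*s) + (-((w/t)^2/(2*(1+ρ)) + b*t) - (1-b)*t) := by
      have hρ' : (0:ℝ) < 1 + ρ := by linarith
      field_simp
      ring
    rw [this]
    gcongr <;> linarith
  -- integrability of the bounding functions
  have hintb : IntegrableOn (fun t => Real.exp (-((1-b) * t))) (Set.Ioi (0:ℝ)) := by
    have h := exp_neg_integrableOn_Ioi 0 h1b
    have e : (fun x : ℝ => Real.exp (-(1-b) * x)) = fun t => Real.exp (-((1-b)*t)) := by
      funext x; rw [neg_mul]
    rwa [e] at h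
  have hinta : IntegrableOn (fun s => Real.exp (-((1-a) * s))) (Set.Ioi (0:ℝ)) := by
    have h := exp_neg_integrableOn_Ioi 0 h1a
    have e : (fun x : ℝ => Real.exp (-(1-a) * x)) = fun s => Real.exp (-((1-a)*s)) := by
      funext x; rw [neg_mul]
    rwa [e] at h
  -- inner integral bound
  have hinner : ∀ s ∈ Set.Ioi (0:ℝ),
      (∫ t in Set.Ioi (0:ℝ),
        Real.exp (-((w / s) ^ 2 + (w / t) ^ 2) / (2 * (1 + ρ)) - s - t))
      ≤ Ea * Eb * Real.exp (-((1-a) * s)) * (1/(1-b)) := by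
    intro s hs
    have step : (∫ t in Set.Ioi (0:ℝ),
        Real.exp (-((w / s) ^ 2 + (w / t) ^ 2) / (2 * (1 + ρ)) - s - t))
        ≤ ∫ t in Set.Ioi (0:ℝ),
            Ea * Eb * Real.exp (-((1-a) * s)) * Real.exp (-((1-b) * t)) := by
      apply integral_mono_of_nonneg
      · exact Filter.Eventually.of_forall fun t => (Real.exp_pos _).le
      · exact (hintb.const_mul _)
      · filter_upwards [ae_restrict_mem measurableSet_Ioi] with t ht
        have := hpt s hs t ht
        linarith [this]
    calc _ ≤ _ := step
      _ = Ea * Eb * Real.exp (-((1-a) * s)) * (1/(1-b)) := by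
          rw [integral_const_mul, exp_int h1b]
  have stepA : (∫ s in Set.Ioi (0:ℝ), ∫ t in Set.Ioi (0:ℝ),
        Real.exp (-((w / s) ^ 2 + (w / t) ^ 2) / (2 * (1 + ρ)) - s - t))
      ≤ ∫ s in Set.Ioi (0:ℝ), Ea * Eb * Real.exp (-((1-a) * s)) * (1/(1-b)) := by
    apply integral_mono_of_nonneg
    · exact Filter.Eventually.of_forall fun s =>
        integral_nonneg fun t => (Real.exp_pos _).le
    · exact (hinta.const_mul (Ea * Eb)).mul_const (1/(1-b))
    · filter_upwards [ae_restrict_mem measurableSet_Ioi] with s hs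
      exact hinner s hs
  have stepB : (∫ s in Set.Ioi (0:ℝ), Ea * Eb * Real.exp (-((1-a) * s)) * (1/(1-b)))
      = Ea * Eb * (1/(1-b)) * (1/(1-a)) := by
    have e : (fun s => Ea * Eb * Real.exp (-((1-a) * s)) * (1/(1-b)))
        = fun s => (Ea * Eb * (1/(1-b))) * Real.exp (-((1-a) * s)) := by
      funext s; ring
    rw [e, integral_const_mul, exp_int h1a]
  have hEE : Ea * Eb = Real.exp (-(3 / 2) * (a ^ ((2:ℝ)/3) + b ^ ((2:ℝ)/3)) *
      (1 + ρ) ^ (-(1:ℝ)/3) * w ^ ((2:ℝ)/3)) := by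
    rw [← Real.exp_add]; congr 1; ring
  calc _ ≤ _ := stepA
    _ = Ea * Eb * (1/(1-b)) * (1/(1-a)) := stepB
    _ = (1 / ((1 - a) * (1 - b))) *
        Real.exp (-(3 / 2) * (a ^ ((2:ℝ)/3) + b ^ ((2:ℝ)/3)) * (1 + ρ) ^ (-(1:ℝ)/3) *
          w ^ ((2:ℝ)/3)) := by
      rw [← hEE]; field_simp
end

section
/- Let S be a random variable with values in [0,1] such that P(S > 1 - 1/u) ≤ c·u^{-τ} for all large u, for some c > 0 and τ ≥ 0. Let X be a standard normal random variable independent of S. Then there exists a constant C > 0 such that P(S·X > w) ≤ C · w^{-2τ-1} · exp(-w²/2) for all w sufficiently large. -/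
open Real MeasureTheory ProbabilityTheory Filter Set Topology

lemma gauss_key (b : ℝ) :
    ∫ x in Set.Ioi b, x * Real.exp (-x^2/2) = Real.exp (-b^2/2) := by
  have hint : IntegrableOn (fun x => x * Real.exp (-x^2/2)) (Set.Ioi b) := by
    have h := integrable_mul_exp_neg_mul_sq (b := (1/2:ℝ)) (by norm_num)
    have : (fun x : ℝ => x * Real.exp (-x^2/2)) = fun x : ℝ => x * Real.exp (-(1/2) * x^2) := by
      ext x; ring_nf
    rw [this]; exact h.integrableOn
  have hderiv : ∀ x ∈ Set.Ici b, HasDerivAt (fun x : ℝ => -Real.exp (-x^2/2))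
      (x * Real.exp (-x^2/2)) x := by
    intro x _
    have h1 : HasDerivAt (fun x : ℝ => -x^2/2) (-x) x := by
      have h := ((hasDerivAt_pow 2 x).div_const 2).fun_neg
      have e : (fun x : ℝ => -x^2/2) = fun i => -(i^2/2) := by ext y; ring
      rw [e]; exact h.congr_deriv (by norm_num)
    have := (h1.exp).fun_neg
    exact this.congr_deriv (by ring)
  have htend : Tendsto (fun x : ℝ => -Real.exp (-x^2/2)) atTop (𝓝 0) := by
    have h1 : Tendsto (fun x : ℝ => -x^2/2) atTop atBot := by
      have h2 : Tendsto (fun x : ℝ => x^2/2) atTop atTop :=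
        (tendsto_pow_atTop (two_ne_zero)).atTop_div_const (by norm_num)
      have := tendsto_neg_atBot_iff.mpr h2
      simpa [neg_div] using this
    have := (Real.tendsto_exp_atBot.comp h1).neg
    simpa using this
  have := integral_Ioi_of_hasDerivAt_of_tendsto' hderiv hint htend
  rw [this]; ring


lemma gauss_tail {b : ℝ} (hb : 1 ≤ b) :
    ((gaussianReal 0 1) (Set.Ioi b)).toReal ≤ Real.exp (-b^2/2) / b := by
  have hb0 : (0:ℝ) < b := lt_of_lt_of_le one_pos hb
  rw [gaussianReal_apply_eq_integral 0 one_ne_zero,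
    ENNReal.toReal_ofReal (setIntegral_nonneg measurableSet_Ioi
      (fun x _ => gaussianPDFReal_nonneg _ _ _))]
  have hint : IntegrableOn (fun x => x * Real.exp (-x^2/2)) (Set.Ioi b) := by
    have h := integrable_mul_exp_neg_mul_sq (b := (1/2:ℝ)) (by norm_num)
    have he : (fun x : ℝ => x * Real.exp (-x^2/2)) = fun x : ℝ => x * Real.exp (-(1/2) * x^2) := by
      ext x; ring_nf
    rw [he]; exact h.integrableOn
  have hmono : ∫ x in Set.Ioi b, gaussianPDFReal 0 1 x
      ≤ ∫ x in Set.Ioi b, b⁻¹ * (x * Real.exp (-x^2/2)) := by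
    refine setIntegral_mono_on ((integrable_gaussianPDFReal 0 1).integrableOn)
      (hint.const_mul _) measurableSet_Ioi ?_
    intro x hx
    have hxb : b ≤ x := le_of_lt hx
    have h1 : (1:ℝ) ≤ Real.sqrt (2 * π * 1) := by
      rw [Real.one_le_sqrt]
      nlinarith [Real.pi_gt_three]
    have hexp : (0:ℝ) < Real.exp (-(x-0)^2/(2*1)) := Real.exp_pos _
    unfold gaussianPDFReal
    push_cast
    have h2 : (1:ℝ) ≤ b⁻¹ * x := by
      rw [inv_mul_eq_div, le_div_iff₀ hb0]; linarith
    have h3 : (1 / Real.sqrt (2 * π * 1)) ≤ 1 := by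
      rw [div_le_one (by linarith)]; exact h1
    have h4 : Real.exp (-(x-0)^2/(2*1)) = Real.exp (-x^2/2) := by norm_num
    rw [h4]
    have h5 : (Real.sqrt (2*π*1))⁻¹ ≤ 1 := by rw [← one_div]; exact h3
    nlinarith [mul_le_mul_of_nonneg_right h5 (Real.exp_pos (-x^2/2)).le,
      mul_le_mul_of_nonneg_right h2 (Real.exp_pos (-x^2/2)).le]
  calc ∫ x in Set.Ioi b, gaussianPDFReal 0 1 x
      ≤ ∫ x in Set.Ioi b, b⁻¹ * (x * Real.exp (-x^2/2)) := hmono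
    _ = b⁻¹ * Real.exp (-b^2/2) := by rw [integral_const_mul, gauss_key]
    _ = Real.exp (-b^2/2) / b := by rw [inv_mul_eq_div]

lemma tailX {Ω : Type*} [MeasureSpace Ω] [IsProbabilityMeasure (ℙ : Measure Ω)]
    {X : Ω → ℝ} (hX : Measure.map X ℙ = gaussianReal 0 1) {b : ℝ} (hb : 1 ≤ b) :
    (ℙ (X ⁻¹' Set.Ioi b)).toReal ≤ Real.exp (-b^2/2) / b := by
  have hmeas : AEMeasurable X ℙ := by
    by_contra h
    rw [Measure.map_of_not_aemeasurable h] at hX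
    have := congrArg (fun μ : Measure ℝ => μ Set.univ) hX
    simp at this
  have : ℙ (X ⁻¹' Set.Ioi b) = gaussianReal 0 1 (Set.Ioi b) := by
    rw [← hX, Measure.map_apply_of_aemeasurable hmeas measurableSet_Ioi]
  rw [this]; exact gauss_tail hb

lemma sum_aux (c τ : ℝ) (hc : 0 < c) (hτ : 0 ≤ τ) :
    Summable (fun i : ℕ => (c * ((2:ℝ)^i)^τ + 1) * Real.exp (-(2:ℝ)^i/4)) := by
  apply summable_of_ratio_norm_eventually_le (r := 1/2) (by norm_num)
  have hto : Tendsto (fun i : ℕ => Real.exp (-(2:ℝ)^i/4)) atTop (𝓝 0) := by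
    have h1 : Tendsto (fun i : ℕ => -(2:ℝ)^i/4) atTop atBot := by
      have h2 : Tendsto (fun i : ℕ => (2:ℝ)^i) atTop atTop :=
        tendsto_pow_atTop_atTop_of_one_lt (by norm_num)
      have := tendsto_neg_atBot_iff.mpr (h2.atTop_div_const (show (0:ℝ) < 4 by norm_num))
      simpa [neg_div] using this
    exact Real.tendsto_exp_atBot.comp h1
  have h2τ : (1:ℝ) ≤ (2:ℝ)^τ := Real.one_le_rpow (by norm_num) hτ
  have hev : ∀ᶠ i : ℕ in atTop, Real.exp (-(2:ℝ)^i/4) ≤ (1/2) * ((2:ℝ)^τ)⁻¹ := by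
    have hpos : (0:ℝ) < (1/2) * ((2:ℝ)^τ)⁻¹ := by positivity
    exact hto.eventually_le_const hpos
  filter_upwards [hev] with i hi
  have hp : (0:ℝ) < (2:ℝ)^i := by positivity
  have hfpos : ∀ j : ℕ, (0:ℝ) < (c * ((2:ℝ)^j)^τ + 1) * Real.exp (-(2:ℝ)^j/4) := by
    intro j; positivity
  rw [Real.norm_of_nonneg (hfpos _).le, Real.norm_of_nonneg (hfpos _).le]
  have e1 : ((2:ℝ)^(i+1))^τ = (2:ℝ)^τ * ((2:ℝ)^i)^τ := by
    rw [pow_succ, Real.mul_rpow (by positivity) (by norm_num), mul_comm]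
  have e2 : Real.exp (-(2:ℝ)^(i+1)/4) = Real.exp (-(2:ℝ)^i/4) * Real.exp (-(2:ℝ)^i/4) := by
    rw [← Real.exp_add]; congr 1; rw [pow_succ]; ring
  rw [e1, e2]
  have key : c * ((2:ℝ)^τ * ((2:ℝ)^i)^τ) + 1 ≤ (2:ℝ)^τ * (c * ((2:ℝ)^i)^τ + 1) := by
    have : (0:ℝ) ≤ ((2:ℝ)^i)^τ := by positivity
    nlinarith
  calc (c * ((2:ℝ)^τ * ((2:ℝ)^i)^τ) + 1) * (Real.exp (-(2:ℝ)^i/4) * Real.exp (-(2:ℝ)^i/4))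
      ≤ ((2:ℝ)^τ * (c * ((2:ℝ)^i)^τ + 1)) * (((1/2) * ((2:ℝ)^τ)⁻¹) * Real.exp (-(2:ℝ)^i/4)) := by
        apply mul_le_mul key _ (by positivity) (by positivity)
        exact mul_le_mul_of_nonneg_right hi (Real.exp_pos _).le
    _ = (1/2) * ((2:ℝ)^τ * ((2:ℝ)^τ)⁻¹) * ((c * ((2:ℝ)^i)^τ + 1) * Real.exp (-(2:ℝ)^i/4)) := by
        ring
    _ = 1/2 * ((c * ((2:ℝ)^i)^τ + 1) * Real.exp (-(2:ℝ)^i/4)) := by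
        rw [mul_inv_cancel₀ (by positivity : ((2:ℝ)^τ) ≠ 0)]; ring



set_option maxHeartbeats 1000000 in
theorem stmt_4 {Ω : Type*} [MeasureSpace Ω] [IsProbabilityMeasure (ℙ : Measure Ω)]
    (S X : Ω → ℝ) (hSrange : ∀ ω, S ω ∈ Set.Icc (0:ℝ) 1)
    (hX : Measure.map X ℙ = gaussianReal 0 1)
    (hindep : IndepFun S X)
    (c τ : ℝ) (hc : 0 < c) (hτ : 0 ≤ τ)
    (htail : ∃ u₁ : ℝ, ∀ u ≥ u₁, (ℙ {ω | S ω > 1 - 1 / u}).toReal ≤ c * u ^ (-τ)) :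
    ∃ C > 0, ∃ w₀ : ℝ, ∀ w ≥ w₀,
      (ℙ {ω | S ω * X ω > w}).toReal ≤ C * w ^ (-2 * τ - 1) * Real.exp (-w ^ 2 / 2) := by
  classical
  obtain ⟨u₁, hu⟩ := htail
  set u' : ℝ := max u₁ 1 with hu'def
  have hu'1 : (1:ℝ) ≤ u' := le_max_right _ _
  have hu'0 : (0:ℝ) < u' := lt_of_lt_of_le one_pos hu'1
  set T : ℝ := ∑' i : ℕ, (c * ((2:ℝ)^i)^τ + 1) * Real.exp (-(2:ℝ)^i/4) with hTdef
  have hTsum := sum_aux c τ hc hτ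
  have hT0 : 0 ≤ T := tsum_nonneg (fun i => by positivity)
  refine ⟨Real.exp (1/2) * T + 1, by positivity, 8 + 8*τ*u', ?_⟩
  intro w hw
  have hw8 : (8:ℝ) ≤ w := by nlinarith [mul_nonneg (mul_nonneg (by norm_num : (0:ℝ) ≤ 8) hτ) hu'0.le]
  have hw0 : (0:ℝ) < w := by linarith
  have hwτ : 8*τ*u' ≤ w := by linarith
  have hwsq : (64:ℝ) ≤ w^2 := by nlinarith
  -- the dyadic exponent K
  obtain ⟨K, hK1, hK2⟩ : ∃ K : ℕ, (2:ℝ)^K ≤ w^2/4 ∧ w^2/4 < (2:ℝ)^(K+1) := by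
    have hn1 : 1 ≤ ⌊w^2/4⌋₊ := Nat.le_floor (by push_cast; nlinarith)
    refine ⟨Nat.log 2 ⌊w^2/4⌋₊, ?_, ?_⟩
    · calc ((2:ℝ)^(Nat.log 2 ⌊w^2/4⌋₊)) = ((2^(Nat.log 2 ⌊w^2/4⌋₊) : ℕ) : ℝ) := by push_cast; ring
      _ ≤ ((⌊w^2/4⌋₊:ℕ):ℝ) := Nat.cast_le.mpr (Nat.pow_log_le_self 2 (by omega))
      _ ≤ w^2/4 := Nat.floor_le (by positivity)
    · calc w^2/4 < ((⌊w^2/4⌋₊:ℕ):ℝ)+1 := Nat.lt_floor_add_one _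
      _ ≤ ((2^(Nat.log 2 ⌊w^2/4⌋₊ + 1):ℕ):ℝ) := by
          exact_mod_cast Nat.succ_le_of_lt (Nat.lt_pow_succ_log_self (by norm_num) _)
      _ = (2:ℝ)^(Nat.log 2 ⌊w^2/4⌋₊ + 1) := by push_cast; ring
  have hpow_le : ∀ i ≤ K+1, (2:ℝ)^i ≤ w^2/2 := by
    intro i hi
    calc (2:ℝ)^i ≤ (2:ℝ)^(K+1) := pow_le_pow_right₀ (by norm_num) hi
    _ = 2 * (2:ℝ)^K := by ring
    _ ≤ 2 * (w^2/4) := by linarith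
    _ = w^2/2 := by ring
  -- layer definitions
  set d : ℕ → ℝ := fun i => (2:ℝ)^i / w^2 with hd
  set q : ℕ → ℝ := fun i => if i = 0 then 1 else 1 - d i / 2 with hqdef
  set E : ℕ → Set Ω := fun i => S ⁻¹' (Set.Ioi (1 - d i)) ∩ X ⁻¹' (Set.Ioi (w / q i)) with hE
  set F : Set Ω := X ⁻¹' (Set.Ioi (w / (1 - d (K+1)))) with hF
  have hd_pos : ∀ i : ℕ, 0 < d i := by intro i; rw [hd]; positivity
  have hd_mul : ∀ i : ℕ, d i * w^2 = (2:ℝ)^i := by intro i; rw [hd]; field_simp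
  have hq_facts : ∀ i ≤ K+1, 3/4 ≤ q i ∧ q i ≤ 1 := by
    intro i hi
    by_cases h0 : i = 0
    · simp only [hqdef, h0, if_pos rfl]; norm_num
    · have h1 : d i ≤ 1/2 := by
        rw [hd, div_le_iff₀ (by positivity)]
        have := hpow_le i hi; linarith
      have h2 := hd_pos i
      simp only [hqdef, if_neg h0]
      constructor <;> linarith
  have hq_pos : ∀ i ≤ K+1, 0 < q i := fun i hi => lt_of_lt_of_le (by norm_num) (hq_facts i hi).1
  -- covering
  have hcover : {ω | S ω * X ω > w} ⊆ (⋃ i ∈ Finset.range (K+2), E i) ∪ F := by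
    intro ω hω
    simp only [Set.mem_setOf_eq] at hω
    obtain ⟨hS0, hS1⟩ := hSrange ω
    have hX0 : 0 < X ω := by
      by_contra h; push_neg at h
      nlinarith
    have hSpos : 0 < S ω := by
      by_contra h; push_neg at h
      nlinarith
    have hXgt : w / S ω < X ω := by
      rw [div_lt_iff₀ hSpos]; nlinarith
    by_cases hcase : 1 - d (K+1) < S ω
    · have hPex : ∃ i, 1 - d i < S ω := ⟨K+1, hcase⟩
      have hj : 1 - d (Nat.find hPex) < S ω := Nat.find_spec hPex
      have hjle : Nat.find hPex ≤ K+1 := Nat.find_min' hPex hcase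
      refine Set.mem_union_left _ (Set.mem_biUnion (Finset.mem_range.mpr (by omega)) ⟨hj, ?_⟩)
      simp only [Set.mem_preimage, Set.mem_Ioi]
      have hSq : S ω ≤ q (Nat.find hPex) := by
        rcases Nat.eq_zero_or_pos (Nat.find hPex) with h0 | h0
        · rw [hqdef]; simp [h0]; exact hS1
        · obtain ⟨m, hm⟩ : ∃ m, Nat.find hPex = m+1 := ⟨Nat.find hPex - 1, by omega⟩
          have hmin := Nat.find_min hPex (m := m) (by omega)
          push_neg at hmin
          have hqm : q (m+1) = 1 - d m := by
            simp only [hqdef, if_neg (Nat.succ_ne_zero m)]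
            congr 1
            rw [hd]; rw [pow_succ]; ring
          rw [hm, hqm]; exact hmin
      have h1 : w / q (Nat.find hPex) ≤ w / S ω :=
        div_le_div_of_nonneg_left hw0.le hSpos hSq
      exact lt_of_le_of_lt h1 hXgt
    · push_neg at hcase
      refine Set.mem_union_right _ ?_
      simp only [hF, Set.mem_preimage, Set.mem_Ioi]
      have h1 : w / (1 - d (K+1)) ≤ w / S ω :=
        div_le_div_of_nonneg_left hw0.le hSpos hcase
      exact lt_of_le_of_lt h1 hXgt
  -- measure chain to reals
  have hsub : ℙ {ω | S ω * X ω > w} ≤ ∑ i ∈ Finset.range (K+2), ℙ (E i) + ℙ F :=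
    (measure_mono hcover).trans ((measure_union_le _ _).trans
      (add_le_add_left (measure_biUnion_finset_le _ _) _))
  have hRfin : (∑ i ∈ Finset.range (K+2), ℙ (E i)) ≠ ⊤ :=
    (ENNReal.sum_lt_top.mpr (fun i _ => measure_lt_top _ _)).ne
  have hreal : (ℙ {ω | S ω * X ω > w}).toReal
      ≤ ∑ i ∈ Finset.range (K+2), (ℙ (E i)).toReal + (ℙ F).toReal := by
    have h1 := ENNReal.toReal_mono (by
      exact ENNReal.add_ne_top.mpr ⟨hRfin, measure_ne_top _ _⟩) hsub
    rwa [ENNReal.toReal_add hRfin (measure_ne_top _ _),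
      ENNReal.toReal_sum (fun i _ => measure_ne_top _ _)] at h1
  -- abbreviations
  set Z : ℝ := (w^2)^(-τ) * Real.exp (-w^2/2) / w with hZdef
  have hZ0 : 0 ≤ Z := by rw [hZdef]; positivity
  -- rpow / exp comparison
  have hlogsq : ∀ a : ℝ, 2*τ*w ≤ a → (w^2)^τ ≤ Real.exp a := by
    intro a ha
    rw [Real.rpow_def_of_pos (by positivity)]
    apply Real.exp_le_exp.mpr
    have hlog : Real.log (w^2) = 2 * Real.log w := by
      rw [sq, Real.log_mul hw0.ne' hw0.ne']; ring
    have hlw : Real.log w ≤ w := by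
      have := Real.log_le_sub_one_of_pos hw0; linarith
    rw [hlog]
    nlinarith
  have hstar : Real.exp (-(w^2/(4*u'))) ≤ (w^2)^(-τ) := by
    rw [Real.rpow_neg (by positivity), Real.exp_neg]
    apply inv_anti₀ (by positivity)
    apply hlogsq
    rw [le_div_iff₀ (by positivity)]
    nlinarith [mul_le_mul_of_nonneg_right hwτ hw0.le]
  have hstar2 : Real.exp (-(7*w^2/18)) ≤ (w^2)^(-τ) := by
    rw [Real.rpow_neg (by positivity), Real.exp_neg]
    apply inv_anti₀ (by positivity)
    apply hlogsq
    nlinarith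
  -- per-term bound
  have hterm : ∀ i ∈ Finset.range (K+2),
      (ℙ (E i)).toReal ≤ (c * ((2:ℝ)^i)^τ + 1) * Real.exp (-(2:ℝ)^i/4) * (Real.exp (1/2) * Z) := by
    intro i hi
    have hiK : i ≤ K+1 := by
      have := Finset.mem_range.mp hi; omega
    have hqi := hq_facts i hiK
    have hqi0 : 0 < q i := hq_pos i hiK
    have hsq : w^2 + ((2:ℝ)^i - 1) ≤ (w/q i)^2 := by
      by_cases h0 : i = 0
      · simp only [hqdef, h0, if_pos rfl, pow_zero, div_one]
        norm_num
      · have hqi' : q i = 1 - d i / 2 := by simp [hqdef, h0]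
        have hdi1 : d i ≤ 1/2 := by
          rw [hd, div_le_iff₀ (by positivity)]
          have := hpow_le i hiK; linarith
        have hdi0 := hd_pos i
        have hqpos : (0:ℝ) < 1 - d i / 2 := by linarith
        have h2i' : (2:ℝ)^i = d i * w^2 := (hd_mul i).symm
        rw [hqi', div_pow, le_div_iff₀ (by positivity : (0:ℝ) < (1 - d i / 2)^2), h2i']
        have key : (1 + d i) * (1 - d i / 2)^2 ≤ 1 := by
          nlinarith [mul_nonneg (mul_nonneg hdi0.le hdi0.le) (by linarith : (0:ℝ) ≤ 3 - d i)]
        have key2 : w^2 * ((1 + d i) * (1 - d i / 2)^2) ≤ w^2 * 1 :=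
          mul_le_mul_of_nonneg_left key (by positivity)
        nlinarith [sq_nonneg (1 - d i / 2)]
    have hb1 : 1 ≤ w / q i := by
      rw [le_div_iff₀ hqi0]; nlinarith [hqi.2, hw8]
    have hvw : w ≤ w / q i := by
      rw [le_div_iff₀ hqi0]; nlinarith [hqi.2, hw0]
    have hX2 : (ℙ (X ⁻¹' Set.Ioi (w / q i))).toReal
        ≤ Real.exp (1/2) * Real.exp (-(2:ℝ)^i/2) * Real.exp (-w^2/2) / w := by
      refine (tailX hX hb1).trans ?_
      have hexp : Real.exp (-(w/q i)^2/2)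
          ≤ Real.exp (1/2) * Real.exp (-(2:ℝ)^i/2) * Real.exp (-w^2/2) := by
        rw [← Real.exp_add, ← Real.exp_add]
        apply Real.exp_le_exp.mpr
        linarith
      apply div_le_div₀ (by positivity) hexp hw0 hvw
    have hprod : (ℙ (E i)).toReal
        = (ℙ (S ⁻¹' Set.Ioi (1 - d i))).toReal * (ℙ (X ⁻¹' Set.Ioi (w / q i))).toReal := by
      rw [hE]
      rw [hindep.measure_inter_preimage_eq_mul _ _ measurableSet_Ioi measurableSet_Ioi,
        ENNReal.toReal_mul]
    have hXnn : (0:ℝ) ≤ (ℙ (X ⁻¹' Set.Ioi (w / q i))).toReal := ENNReal.toReal_nonneg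
    by_cases hgood : u' ≤ w^2/(2:ℝ)^i
    · -- good layer: use tail assumption
      have hone : 1/(w^2/(2:ℝ)^i) = d i := by rw [one_div_div, hd]
      have hset : S ⁻¹' Set.Ioi (1 - d i) = {ω | S ω > 1 - 1/(w^2/(2:ℝ)^i)} := by
        ext ω; simp [Set.mem_preimage, Set.mem_Ioi, hone]
      have hp1 : (ℙ (S ⁻¹' Set.Ioi (1 - d i))).toReal ≤ c * (((2:ℝ)^i)^τ * (w^2)^(-τ)) := by
        rw [hset]
        refine (hu _ (le_trans (le_max_left _ _) hgood)).trans (le_of_eq ?_)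
        congr 1
        rw [Real.rpow_neg (by positivity), Real.rpow_neg (by positivity),
          Real.div_rpow (by positivity) (by positivity)]
        field_simp
      calc (ℙ (E i)).toReal
          ≤ (c * (((2:ℝ)^i)^τ * (w^2)^(-τ)))
            * (Real.exp (1/2) * Real.exp (-(2:ℝ)^i/2) * Real.exp (-w^2/2) / w) := by
            rw [hprod]
            exact mul_le_mul hp1 hX2 hXnn (by positivity)
        _ = (c * ((2:ℝ)^i)^τ) * Real.exp (-(2:ℝ)^i/2) * (Real.exp (1/2) * Z) := by
            rw [hZdef]; ring
        _ ≤ (c * ((2:ℝ)^i)^τ + 1) * Real.exp (-(2:ℝ)^i/4) * (Real.exp (1/2) * Z) := by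
            apply mul_le_mul_of_nonneg_right _ (by positivity)
            apply mul_le_mul (by nlinarith [Real.rpow_nonneg (by positivity : (0:ℝ) ≤ (2:ℝ)^i) τ])
              (Real.exp_le_exp.mpr (by nlinarith [pow_pos (by norm_num : (0:ℝ) < 2) i]))
              (Real.exp_pos _).le (by positivity)
    · -- bad layer: trivial bound on S, absorb into the exponential
      push_neg at hgood
      have hp1 : (ℙ (S ⁻¹' Set.Ioi (1 - d i))).toReal ≤ 1 := by
        simpa using ENNReal.toReal_mono ENNReal.one_ne_top prob_le_one
      have h2i : w^2/u' ≤ (2:ℝ)^i := by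
        have h2 : (0:ℝ) < (2:ℝ)^i := by positivity
        rw [div_lt_iff₀ h2] at hgood
        rw [div_le_iff₀ hu'0]
        nlinarith
      have hb2 : Real.exp (-(2:ℝ)^i/4) ≤ (w^2)^(-τ) := by
        refine le_trans (Real.exp_le_exp.mpr ?_) hstar
        have h2i'' : w^2 ≤ (2:ℝ)^i * u' := (div_le_iff₀ hu'0).mp h2i
        have : w^2/(4*u') ≤ (2:ℝ)^i/4 := by
          rw [div_le_div_iff₀ (by positivity) (by norm_num)]
          nlinarith
        linarith
      have hsplit : Real.exp (-(2:ℝ)^i/2) = Real.exp (-(2:ℝ)^i/4) * Real.exp (-(2:ℝ)^i/4) := by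
        rw [← Real.exp_add]; congr 1; ring
      calc (ℙ (E i)).toReal
          ≤ (ℙ (X ⁻¹' Set.Ioi (w / q i))).toReal := by
            rw [hprod]; exact mul_le_of_le_one_left hXnn hp1
        _ ≤ Real.exp (1/2) * Real.exp (-(2:ℝ)^i/2) * Real.exp (-w^2/2) / w := hX2
        _ = Real.exp (-(2:ℝ)^i/4) * (Real.exp (-(2:ℝ)^i/4)
              * (Real.exp (1/2) * Real.exp (-w^2/2) / w)) := by rw [hsplit]; ring
        _ ≤ Real.exp (-(2:ℝ)^i/4) * ((w^2)^(-τ)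
              * (Real.exp (1/2) * Real.exp (-w^2/2) / w)) := by
            apply mul_le_mul_of_nonneg_left (mul_le_mul_of_nonneg_right hb2 (by positivity))
              (Real.exp_pos _).le
        _ = 1 * (Real.exp (-(2:ℝ)^i/4) * (Real.exp (1/2) * Z)) := by rw [hZdef]; ring
        _ ≤ (c * ((2:ℝ)^i)^τ + 1) * Real.exp (-(2:ℝ)^i/4) * (Real.exp (1/2) * Z) := by
            rw [mul_assoc]
            apply mul_le_mul_of_nonneg_right _ (by positivity)
            nlinarith [Real.rpow_nonneg (by positivity : (0:ℝ) ≤ (2:ℝ)^i) τ]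
  -- sum bound
  have hsum : ∑ i ∈ Finset.range (K+2), (ℙ (E i)).toReal ≤ T * (Real.exp (1/2) * Z) := by
    calc ∑ i ∈ Finset.range (K+2), (ℙ (E i)).toReal
        ≤ ∑ i ∈ Finset.range (K+2),
            (c * ((2:ℝ)^i)^τ + 1) * Real.exp (-(2:ℝ)^i/4) * (Real.exp (1/2) * Z) :=
          Finset.sum_le_sum hterm
      _ = (∑ i ∈ Finset.range (K+2), (c * ((2:ℝ)^i)^τ + 1) * Real.exp (-(2:ℝ)^i/4))
            * (Real.exp (1/2) * Z) := by rw [Finset.sum_mul]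
      _ ≤ T * (Real.exp (1/2) * Z) := by
          apply mul_le_mul_of_nonneg_right _ (by positivity)
          exact Summable.sum_le_tsum _ (fun i _ => by positivity) hTsum
  -- F bound
  have hFb : (ℙ F).toReal ≤ Z := by
    have hdK : 1/4 < d (K+1) ∧ d (K+1) ≤ 1/2 := by
      constructor
      · rw [hd, lt_div_iff₀ (by positivity)]; nlinarith [hK2]
      · rw [hd, div_le_iff₀ (by positivity)]
        have := hpow_le (K+1) le_rfl; linarith
    have ha0 : (1:ℝ)/2 ≤ 1 - d (K+1) := by linarith [hdK.2]
    have ha1 : 1 - d (K+1) < 3/4 := by linarith [hdK.1]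
    have hapos : (0:ℝ) < 1 - d (K+1) := by linarith
    have hv43 : 4*w/3 ≤ w / (1 - d (K+1)) := by
      rw [le_div_iff₀ hapos]; nlinarith
    have hvw : w ≤ w / (1 - d (K+1)) := by nlinarith
    have hb1 : 1 ≤ w / (1 - d (K+1)) := by linarith
    refine (tailX hX hb1).trans ?_
    have hexp : Real.exp (-(w/(1 - d (K+1)))^2/2)
        ≤ (w^2)^(-τ) * Real.exp (-w^2/2) := by
      have hv2 : 16*w^2/9 ≤ (w/(1 - d (K+1)))^2 := by
        have h1 : (4*w/3)^2 ≤ (w/(1 - d (K+1)))^2 :=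
          pow_le_pow_left₀ (by positivity) hv43 2
        nlinarith [h1]
      calc Real.exp (-(w/(1 - d (K+1)))^2/2) ≤ Real.exp (-(7*w^2/18)) * Real.exp (-w^2/2) := by
            rw [← Real.exp_add]; apply Real.exp_le_exp.mpr; linarith
        _ ≤ (w^2)^(-τ) * Real.exp (-w^2/2) :=
            mul_le_mul_of_nonneg_right hstar2 (Real.exp_pos _).le
    rw [hZdef]
    apply div_le_div₀ (by positivity) hexp hw0 hvw
  -- final assembly
  have hZeq : Z = w ^ (-2*τ-1) * Real.exp (-w^2/2) := by
    have h1 : (w^2:ℝ)^(-τ) = w^(-2*τ) := by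
      rw [← Real.rpow_natCast w 2, ← Real.rpow_mul hw0.le]
      congr 1; push_cast; ring
    have h2 : w^(-2*τ-1) = w^(-2*τ) * w⁻¹ := by
      rw [← Real.rpow_neg_one w, ← Real.rpow_add hw0]
      ring_nf
    rw [hZdef, h1, h2]; ring
  calc (ℙ {ω | S ω * X ω > w}).toReal
      ≤ ∑ i ∈ Finset.range (K+2), (ℙ (E i)).toReal + (ℙ F).toReal := hreal
    _ ≤ T * (Real.exp (1/2) * Z) + Z := add_le_add hsum hFb
    _ = (Real.exp (1/2) * T + 1) * Z := by ring
    _ = (Real.exp (1/2) * T + 1) * w ^ (-2*τ-1) * Real.exp (-w^2/2) := by rw [hZeq]; ring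
end

section
/- Let σ ∈ [0,1), p > 0, and β ∈ (0, 2(1+σ)^{-p/(2+p)} - 1). Let λ(k,n) be nonnegative reals with λ(k,n) ≤ σ for all 1 ≤ k < n, and suppose max_{[n^β] ≤ k < n} λ(k,n)·ln n → 0 as n → ∞. Let w_n satisfy w_n ~ (ln n / T)^{(2+p)/(2p)} and exp(-T w_n^{2p/(2+p)}) ~ C·w_n^{-2α/(2+p)}/n for constants T, C > 0, α ∈ ℝ. Then n·w_n^{(4α+2p)/(2+p)}·Σ_{k=1}^{n-1} λ(k,n)·exp(-2(1+λ(k,n))^{-p/(2+p)}·T·w_n^{2p/(2+p)}) → 0 as n → ∞. -/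
open Real Filter

set_option maxHeartbeats 1000000

theorem stmt_15 (σ p β T C α : ℝ)
    (hσ : σ ∈ Set.Ico (0:ℝ) 1) (hp : 0 < p) (hT : 0 < T) (hC : 0 < C)
    (hβ : β ∈ Set.Ioo 0 (2 * (1 + σ) ^ (-p / (2 + p)) - 1))
    (lam : ℕ → ℕ → ℝ)
    (hlam : ∀ n k : ℕ, 1 ≤ k → k < n → 0 ≤ lam k n ∧ lam k n ≤ σ)
    (hmax : ∀ ε > (0:ℝ), ∃ N : ℕ, ∀ n ≥ N, ∀ k : ℕ,
      ⌊(n : ℝ) ^ β⌋₊ ≤ k → k < n → lam k n * Real.log n ≤ ε)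
    (w : ℕ → ℝ) (hwpos : ∀ n, 0 < w n)
    (hw1 : Tendsto (fun n : ℕ => w n / (Real.log n / T) ^ ((2 + p) / (2 * p)))
      atTop (nhds 1))
    (hw2 : Tendsto (fun n : ℕ =>
        Real.exp (-T * w n ^ (2 * p / (2 + p))) / (C * w n ^ (-2 * α / (2 + p)) / n))
      atTop (nhds 1)) :
    Tendsto (fun n : ℕ => (n : ℝ) * w n ^ ((4 * α + 2 * p) / (2 + p)) *
        ∑ k ∈ Finset.Ico 1 n, lam k n *
          Real.exp (-2 * (1 + lam k n) ^ (-p / (2 + p)) * T * w n ^ (2 * p / (2 + p))))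
      atTop (nhds 0) := by
  obtain ⟨hσ0, hσ1⟩ := hσ
  obtain ⟨hβ0, hβ1⟩ := hβ
  have h2p : (0:ℝ) < 2 + p := by linarith
  have hσpos : (0:ℝ) < 1 + σ := by linarith
  have hqneg : -p / (2 + p) ≤ 0 :=
    div_nonpos_of_nonpos_of_nonneg (by linarith) h2p.le
  obtain ⟨γ, hγ_def⟩ : ∃ γ : ℝ, γ = (1 + σ) ^ (-p / (2 + p)) := ⟨_, rfl⟩
  have hγ0 : 0 < γ := hγ_def ▸ Real.rpow_pos_of_pos hσpos _
  have hγ1 : γ ≤ 1 := hγ_def ▸ Real.rpow_le_one_of_one_le_of_nonpos (by linarith) hqneg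
  have hβγ : 1 + β < 2 * γ := by rw [hγ_def]; linarith
  have hβle1 : β ≤ 1 := by linarith
  obtain ⟨u, hu_def⟩ : ∃ u : ℕ → ℝ, u = fun n => T * w n ^ (2 * p / (2 + p)) := ⟨_, rfl⟩
  have hu_pos : ∀ n, 0 < u n := fun n => hu_def ▸ mul_pos hT (Real.rpow_pos_of_pos (hwpos n) _)
  obtain ⟨D, hD_def⟩ : ∃ D : ℕ → ℝ,
    D = fun n => Real.exp (-u n) * n * w n ^ (2 * α / (2 + p)) / C := ⟨_, rfl⟩
  have hlog : Tendsto (fun n : ℕ => Real.log n) atTop atTop :=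
    Real.tendsto_log_atTop.comp tendsto_natCast_atTop_atTop
  -- u n / log n → 1
  have hu_log : Tendsto (fun n : ℕ => u n / Real.log n) atTop (nhds 1) := by
    have h0 : Tendsto (fun n : ℕ =>
        (w n / (Real.log n / T) ^ ((2 + p) / (2 * p))) ^ (2 * p / (2 + p)))
        atTop (nhds 1) := by
      have := hw1.rpow_const (p := 2 * p / (2 + p)) (Or.inl one_ne_zero)
      simpa using this
    refine h0.congr' ?_
    filter_upwards [hlog.eventually_gt_atTop 0] with n hln
    have hA : (0:ℝ) < (Real.log n / T) ^ ((2 + p) / (2 * p)) :=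
      Real.rpow_pos_of_pos (div_pos hln hT) _
    simp only [hu_def]
    rw [Real.div_rpow (le_of_lt (hwpos n)) hA.le,
      ← Real.rpow_mul (div_pos hln hT).le]
    have he : (2 + p) / (2 * p) * (2 * p / (2 + p)) = 1 := by field_simp
    rw [he, Real.rpow_one]
    field_simp
  -- log (w n) / log n → 0
  have hlogw : Tendsto (fun n : ℕ => Real.log (w n) / Real.log n) atTop (nhds 0) := by
    have hinv : Tendsto (fun n : ℕ => (Real.log n)⁻¹) atTop (nhds 0) :=
      hlog.inv_tendsto_atTop
    have hlwa : Tendsto (fun n : ℕ =>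
        Real.log (w n / (Real.log n / T) ^ ((2 + p) / (2 * p)))) atTop (nhds 0) := by
      have := (Real.continuousAt_log one_ne_zero).tendsto.comp hw1
      simpa [Function.comp_def] using this
    have hll : Tendsto (fun n : ℕ => Real.log (Real.log n) / Real.log n)
        atTop (nhds 0) :=
      Real.isLittleO_log_id_atTop.tendsto_div_nhds_zero.comp hlog
    have key : Tendsto (fun n : ℕ =>
        Real.log (w n / (Real.log n / T) ^ ((2 + p) / (2 * p))) * (Real.log n)⁻¹
        + ((2 + p) / (2 * p)) * (Real.log (Real.log n) / Real.log n)
        + ((2 + p) / (2 * p)) * (- Real.log T) * (Real.log n)⁻¹) atTop (nhds 0) := by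
      have := ((hlwa.mul hinv).add (hll.const_mul ((2 + p) / (2 * p)))).add
        (hinv.const_mul (((2 + p) / (2 * p)) * (- Real.log T)))
      simpa using this
    refine key.congr' ?_
    filter_upwards [hlog.eventually_gt_atTop 0] with n hln
    have hA : (0:ℝ) < (Real.log n / T) ^ ((2 + p) / (2 * p)) :=
      Real.rpow_pos_of_pos (div_pos hln hT) _
    have hw : w n = (w n / (Real.log n / T) ^ ((2 + p) / (2 * p))) *
        (Real.log n / T) ^ ((2 + p) / (2 * p)) := by field_simp
    have hwa : 0 < w n / (Real.log n / T) ^ ((2 + p) / (2 * p)) :=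
      div_pos (hwpos n) hA
    rw [eq_comm]
    calc Real.log (w n) / Real.log n
        = (Real.log (w n / (Real.log n / T) ^ ((2 + p) / (2 * p)))
          + ((2 + p) / (2 * p)) * (Real.log (Real.log n) - Real.log T)) / Real.log n := by
          congr 1
          rw [hw, Real.log_mul hwa.ne' hA.ne', Real.log_rpow (div_pos hln hT),
            Real.log_div hln.ne' hT.ne']
          rw [← hw]
      _ = _ := by field_simp; ring
  -- D → 1
  have hD : Tendsto D atTop (nhds 1) := by
    refine hw2.congr' ?_
    filter_upwards [eventually_gt_atTop 0] with n hn
    have hw := hwpos n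
    have hnr : (0:ℝ) < (n:ℝ) := by exact_mod_cast hn
    have hx : w n ^ (-2 * α / (2 + p)) = (w n ^ (2 * α / (2 + p)))⁻¹ := by
      rw [← Real.rpow_neg hw.le]; ring_nf
    simp only [hD_def, hu_def]
    rw [hx]
    have hwp : (0:ℝ) < w n ^ (2 * α / (2 + p)) := Real.rpow_pos_of_pos hw _
    field_simp
  -- the prefactor identity
  have hPexp : ∀ n : ℕ, 0 < n → (n : ℝ) * w n ^ ((4 * α + 2 * p) / (2 + p)) *
      Real.exp (-(2 * u n)) = D n ^ 2 * C ^ 2 * u n / (T * n) := by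
    intro n hn
    have hw := hwpos n
    have hnr : (0:ℝ) < (n:ℝ) := by exact_mod_cast hn
    have h1 : w n ^ ((4 * α + 2 * p) / (2 + p))
        = w n ^ (2 * α / (2 + p)) * w n ^ (2 * α / (2 + p)) * w n ^ (2 * p / (2 + p)) := by
      rw [← Real.rpow_add hw, ← Real.rpow_add hw]
      congr 1
      field_simp
      ring
    have h3 : Real.exp (-u n) ^ 2 = Real.exp (-(2 * u n)) := by
      rw [sq, ← Real.exp_add]; ring_nf
    simp only [hD_def]
    rw [h1, ← h3, hu_def]
    field_simp
  -- short-range majorant tends to 0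
  have hS1 : Tendsto (fun n : ℕ =>
      σ * (n : ℝ) ^ (1 + β) * w n ^ ((4 * α + 2 * p) / (2 + p)) *
        Real.exp (-(2 * γ * u n))) atTop (nhds 0) := by
    have hbr : Tendsto (fun n : ℕ =>
        (1 + β) + ((4 * α + 2 * p) / (2 + p)) * (Real.log (w n) / Real.log n)
          - 2 * γ * (u n / Real.log n))
        atTop (nhds ((1 + β) + ((4 * α + 2 * p) / (2 + p)) * 0 - 2 * γ * 1)) :=
      (tendsto_const_nhds.add (hlogw.const_mul _)).sub (hu_log.const_mul (2 * γ))
    have hc : (1 + β) + ((4 * α + 2 * p) / (2 + p)) * 0 - 2 * γ * 1 < 0 := by linarith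
    have hg := hlog.atTop_mul_neg hc hbr
    have hexp : Tendsto (fun n : ℕ => σ * Real.exp (Real.log n *
        ((1 + β) + ((4 * α + 2 * p) / (2 + p)) * (Real.log (w n) / Real.log n)
          - 2 * γ * (u n / Real.log n)))) atTop (nhds 0) := by
      have := (Real.tendsto_exp_atBot.comp hg).const_mul σ
      simpa using this
    refine hexp.congr' ?_
    filter_upwards [hlog.eventually_gt_atTop 0, eventually_gt_atTop 0] with n hln hn
    have hnr : (0:ℝ) < (n:ℝ) := by exact_mod_cast hn
    have hw := hwpos n
    simp only [Real.rpow_def_of_pos hnr, Real.rpow_def_of_pos hw, mul_assoc,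
      ← Real.exp_add]
    congr 2
    field_simp
    ring
  -- main ε-argument
  rw [NormedAddCommGroup.tendsto_nhds_zero]
  intro ε hε
  have he4 : (0:ℝ) < Real.exp 4 := Real.exp_pos 4
  obtain ⟨ε', hε'_def⟩ : ∃ e : ℝ, e = min 1 (ε * T / (32 * C ^ 2 * Real.exp 4)) := ⟨_, rfl⟩
  have hε'0 : 0 < ε' := hε'_def ▸ lt_min one_pos (by positivity)
  have hε'1 : ε' ≤ 1 := hε'_def ▸ min_le_left _ _
  obtain ⟨N, hN⟩ := hmax ε' hε'0
  have hbound : 8 * C ^ 2 * Real.exp 4 * ε' / T ≤ ε / 4 := by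
    have hb : (0:ℝ) < 32 * C ^ 2 * Real.exp 4 := by positivity
    have h1 : ε' * (32 * C ^ 2 * Real.exp 4) ≤ ε * T :=
      (le_div_iff₀ hb).1 (hε'_def ▸ min_le_right _ _)
    rw [div_le_div_iff₀ hT (by norm_num)]
    calc 8 * C ^ 2 * Real.exp 4 * ε' * 4 = ε' * (32 * C ^ 2 * Real.exp 4) := by ring
      _ ≤ ε * T := h1
  filter_upwards [eventually_ge_atTop N, eventually_ge_atTop 2,
    hlog.eventually_gt_atTop 0,
    hu_log.eventually_lt_const (show (1:ℝ) < 2 by norm_num),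
    hD.eventually_lt_const (show (1:ℝ) < 2 by norm_num),
    hS1.eventually_lt_const (show (0:ℝ) < ε / 2 by linarith)]
    with n hnN hn2 hln hu2 hD2 hS1lt
  have hnr : (1:ℝ) ≤ (n:ℝ) := by exact_mod_cast le_trans (by norm_num : (1:ℕ) ≤ 2) hn2
  have hn0 : 0 < n := by omega
  have hnr0 : (0:ℝ) < (n:ℝ) := by linarith
  set m : ℕ := ⌊(n : ℝ) ^ β⌋₊ with hm_def
  have hnb1 : (1:ℝ) ≤ (n:ℝ) ^ β := by
    calc (1:ℝ) = (n:ℝ) ^ (0:ℝ) := (Real.rpow_zero _).symm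
      _ ≤ (n:ℝ) ^ β := Real.rpow_le_rpow_of_exponent_le hnr hβ0.le
  have hm1 : 1 ≤ m := Nat.le_floor (by exact_mod_cast hnb1)
  have hmn : m ≤ n := by
    have : (n:ℝ) ^ β ≤ (n:ℝ) := by
      calc (n:ℝ) ^ β ≤ (n:ℝ) ^ (1:ℝ) := Real.rpow_le_rpow_of_exponent_le hnr hβle1
        _ = n := Real.rpow_one _
    calc m ≤ ⌊(n:ℝ)⌋₊ := Nat.floor_le_floor this
      _ = n := Nat.floor_natCast n
  have hmr : (m:ℝ) ≤ (n:ℝ) ^ β := Nat.floor_le (by positivity)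
  have hu_le : u n ≤ 2 * Real.log n := by
    have := (div_lt_iff₀ hln).1 hu2
    linarith
  -- split the sum
  rw [← Finset.sum_Ico_consecutive _ hm1 hmn, mul_add]
  have hwn := hwpos n
  have hws : (0:ℝ) ≤ w n ^ ((4 * α + 2 * p) / (2 + p)) := (Real.rpow_pos_of_pos hwn _).le
  have hP0 : (0:ℝ) ≤ (n:ℝ) * w n ^ ((4 * α + 2 * p) / (2 + p)) := by positivity
  -- short part
  have hshort : (n:ℝ) * w n ^ ((4 * α + 2 * p) / (2 + p)) *
      ∑ k ∈ Finset.Ico 1 m, lam k n *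
        Real.exp (-2 * (1 + lam k n) ^ (-p / (2 + p)) * T * w n ^ (2 * p / (2 + p)))
      < ε / 2 := by
    have hterm : ∀ k ∈ Finset.Ico 1 m, lam k n *
        Real.exp (-2 * (1 + lam k n) ^ (-p / (2 + p)) * T * w n ^ (2 * p / (2 + p)))
        ≤ σ * Real.exp (-(2 * γ * u n)) := by
      intro k hk
      rw [Finset.mem_Ico] at hk
      obtain ⟨hlam0, hlamσ⟩ := hlam n k hk.1 (lt_of_lt_of_le hk.2 hmn)
      have hγle : γ ≤ (1 + lam k n) ^ (-p / (2 + p)) := by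
        rw [hγ_def]
        exact Real.rpow_le_rpow_of_nonpos (by linarith) (by linarith) hqneg
      have hexple : -2 * (1 + lam k n) ^ (-p / (2 + p)) * T * w n ^ (2 * p / (2 + p))
          ≤ -(2 * γ * u n) := by
        have hpos : (0:ℝ) ≤ T * w n ^ (2 * p / (2 + p)) := by positivity
        have h10 := mul_le_mul_of_nonneg_right hγle hpos
        simp only [hu_def]
        linarith [h10]
      exact mul_le_mul hlamσ (Real.exp_le_exp.2 hexple) (Real.exp_pos _).le hσ0
    have hsum : ∑ k ∈ Finset.Ico 1 m, lam k n *
        Real.exp (-2 * (1 + lam k n) ^ (-p / (2 + p)) * T * w n ^ (2 * p / (2 + p)))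
        ≤ (m:ℝ) * (σ * Real.exp (-(2 * γ * u n))) := by
      calc _ ≤ ∑ _k ∈ Finset.Ico 1 m, σ * Real.exp (-(2 * γ * u n)) :=
            Finset.sum_le_sum hterm
        _ = ((m - 1 : ℕ) : ℝ) * (σ * Real.exp (-(2 * γ * u n))) := by
            rw [Finset.sum_const, Nat.card_Ico, nsmul_eq_mul]
        _ ≤ (m:ℝ) * (σ * Real.exp (-(2 * γ * u n))) := by
            have : ((m - 1 : ℕ) : ℝ) ≤ (m:ℝ) := by exact_mod_cast Nat.sub_le m 1
            have hpos : (0:ℝ) ≤ σ * Real.exp (-(2 * γ * u n)) := by positivity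
            nlinarith
    refine lt_of_le_of_lt ?_ hS1lt
    have hstep1 := mul_le_mul_of_nonneg_left hsum hP0
    have hstep2 : (n:ℝ) * w n ^ ((4 * α + 2 * p) / (2 + p)) *
        ((m:ℝ) * (σ * Real.exp (-(2 * γ * u n))))
        ≤ (n:ℝ) * w n ^ ((4 * α + 2 * p) / (2 + p)) *
        ((n:ℝ) ^ β * (σ * Real.exp (-(2 * γ * u n)))) := by
      apply mul_le_mul_of_nonneg_left _ hP0
      exact mul_le_mul_of_nonneg_right hmr (by positivity)
    have hstep3 : (n:ℝ) * w n ^ ((4 * α + 2 * p) / (2 + p)) *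
        ((n:ℝ) ^ β * (σ * Real.exp (-(2 * γ * u n))))
        = σ * (n : ℝ) ^ (1 + β) * w n ^ ((4 * α + 2 * p) / (2 + p)) *
          Real.exp (-(2 * γ * u n)) := by
      rw [Real.rpow_add hnr0, Real.rpow_one]
      ring
    linarith [hstep1, hstep2, hstep3.le, hstep3.ge]
  -- long part
  have hlong : (n:ℝ) * w n ^ ((4 * α + 2 * p) / (2 + p)) *
      ∑ k ∈ Finset.Ico m n, lam k n *
        Real.exp (-2 * (1 + lam k n) ^ (-p / (2 + p)) * T * w n ^ (2 * p / (2 + p)))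
      ≤ ε / 4 := by
    have hterm : ∀ k ∈ Finset.Ico m n, lam k n *
        Real.exp (-2 * (1 + lam k n) ^ (-p / (2 + p)) * T * w n ^ (2 * p / (2 + p)))
        ≤ ε' / Real.log n * Real.exp 4 * Real.exp (-(2 * u n)) := by
      intro k hk
      rw [Finset.mem_Ico] at hk
      obtain ⟨hlam0, hlamσ⟩ := hlam n k (le_trans hm1 hk.1) hk.2
      have hεk : lam k n * Real.log n ≤ ε' := hN n hnN k hk.1 hk.2
      have hlamle : lam k n ≤ ε' / Real.log n := (le_div_iff₀ hln).2 hεk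
      have h1l : (0:ℝ) < 1 + lam k n := by linarith
      have hx1 : (1 + lam k n) ^ (-(1:ℝ)) ≤ (1 + lam k n) ^ (-p / (2 + p)) := by
        apply Real.rpow_le_rpow_of_exponent_le (by linarith)
        rw [neg_div]
        have : p / (2 + p) ≤ 1 := by
          rw [div_le_one h2p]; linarith
        linarith
      have hx2 : (1 - lam k n) ≤ (1 + lam k n)⁻¹ := by
        rw [inv_eq_one_div, le_div_iff₀ h1l]
        nlinarith
      have hx3 : 1 - lam k n ≤ (1 + lam k n) ^ (-p / (2 + p)) := by
        rw [← Real.rpow_neg_one (1 + lam k n)] at hx2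
        linarith
      have hlu : lam k n * u n ≤ 2 * ε' := by
        calc lam k n * u n ≤ lam k n * (2 * Real.log n) :=
              mul_le_mul_of_nonneg_left hu_le hlam0
          _ = 2 * (lam k n * Real.log n) := by ring
          _ ≤ 2 * ε' := by linarith
      have hexple : -2 * (1 + lam k n) ^ (-p / (2 + p)) * T * w n ^ (2 * p / (2 + p))
          ≤ 4 * ε' + -(2 * u n) := by
        have h5 : -2 * (1 + lam k n) ^ (-p / (2 + p)) * T * w n ^ (2 * p / (2 + p))
            = -(2 * ((1 + lam k n) ^ (-p / (2 + p)) * u n)) := by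
          simp only [hu_def]; ring
        rw [h5]
        have h6 : (1 - lam k n) * u n ≤ (1 + lam k n) ^ (-p / (2 + p)) * u n :=
          mul_le_mul_of_nonneg_right hx3 (hu_pos n).le
        linarith [h6, hlu]
      calc lam k n * Real.exp (-2 * (1 + lam k n) ^ (-p / (2 + p)) * T *
            w n ^ (2 * p / (2 + p)))
          ≤ (ε' / Real.log n) * Real.exp (4 * ε' + -(2 * u n)) := by
            apply mul_le_mul hlamle (Real.exp_le_exp.2 hexple) (Real.exp_pos _).le
            positivity
        _ = (ε' / Real.log n) * (Real.exp (4 * ε') * Real.exp (-(2 * u n))) := by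
            rw [Real.exp_add]
        _ ≤ ε' / Real.log n * Real.exp 4 * Real.exp (-(2 * u n)) := by
            have h7 : Real.exp (4 * ε') ≤ Real.exp 4 :=
              Real.exp_le_exp.2 (by linarith)
            have h8 : (0:ℝ) ≤ ε' / Real.log n := by positivity
            rw [mul_assoc]
            apply mul_le_mul_of_nonneg_left _ h8
            exact mul_le_mul_of_nonneg_right h7 (Real.exp_pos _).le
    have hsum : ∑ k ∈ Finset.Ico m n, lam k n *
        Real.exp (-2 * (1 + lam k n) ^ (-p / (2 + p)) * T * w n ^ (2 * p / (2 + p)))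
        ≤ (n:ℝ) * (ε' / Real.log n * Real.exp 4 * Real.exp (-(2 * u n))) := by
      calc _ ≤ ∑ _k ∈ Finset.Ico m n,
            ε' / Real.log n * Real.exp 4 * Real.exp (-(2 * u n)) :=
            Finset.sum_le_sum hterm
        _ = ((n - m : ℕ) : ℝ) * (ε' / Real.log n * Real.exp 4 * Real.exp (-(2 * u n))) := by
            rw [Finset.sum_const, Nat.card_Ico, nsmul_eq_mul]
        _ ≤ (n:ℝ) * (ε' / Real.log n * Real.exp 4 * Real.exp (-(2 * u n))) := by
            have hcast : ((n - m : ℕ) : ℝ) ≤ (n:ℝ) := by exact_mod_cast Nat.sub_le n m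
            have hpos : (0:ℝ) ≤ ε' / Real.log n * Real.exp 4 * Real.exp (-(2 * u n)) := by
              positivity
            nlinarith
    have hkey : (n:ℝ) * w n ^ ((4 * α + 2 * p) / (2 + p)) *
        ((n:ℝ) * (ε' / Real.log n * Real.exp 4 * Real.exp (-(2 * u n))))
        = D n ^ 2 * C ^ 2 * (u n / Real.log n) * ε' * Real.exp 4 / T := by
      have h9 : (n:ℝ) * w n ^ ((4 * α + 2 * p) / (2 + p)) *
          ((n:ℝ) * (ε' / Real.log n * Real.exp 4 * Real.exp (-(2 * u n))))
          = ((n:ℝ) * w n ^ ((4 * α + 2 * p) / (2 + p)) * Real.exp (-(2 * u n)))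
            * ((n:ℝ) * ε' * Real.exp 4 / Real.log n) := by
        field_simp
      rw [h9, hPexp n hn0]
      field_simp
    have hDpos : 0 < D n := by
      simp only [hD_def]
      exact div_pos (mul_pos (mul_pos (Real.exp_pos _) hnr0)
        (Real.rpow_pos_of_pos hwn _)) hC
    have hD2' : D n ^ 2 ≤ 4 := by nlinarith [hDpos.le, hD2]
    have hulog2 : u n / Real.log n ≤ 2 := hu2.le
    have hulog0 : 0 ≤ u n / Real.log n := div_nonneg (hu_pos n).le hln.le
    have l1 := mul_le_mul_of_nonneg_left hsum hP0
    have l2 : (n:ℝ) * w n ^ ((4 * α + 2 * p) / (2 + p)) *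
        ((n:ℝ) * (ε' / Real.log n * Real.exp 4 * Real.exp (-(2 * u n)))) ≤ ε / 4 := by
      rw [hkey]
      refine le_trans ?_ hbound
      have hab : D n ^ 2 * (u n / Real.log n) ≤ 8 := by
        have := mul_le_mul hD2' hulog2 hulog0 (by norm_num : (0:ℝ) ≤ 4)
        linarith
      have hK : (0:ℝ) ≤ C ^ 2 * ε' * Real.exp 4 := by positivity
      have h14 := mul_le_mul_of_nonneg_right hab hK
      have h11 : D n ^ 2 * C ^ 2 * (u n / Real.log n) * ε' * Real.exp 4
          ≤ 8 * C ^ 2 * Real.exp 4 * ε' := by linarith [h14]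
      exact (div_le_div_iff_of_pos_right hT).2 h11
    exact l1.trans l2
  -- combine
  have hf0 : (0:ℝ) ≤ (n:ℝ) * w n ^ ((4 * α + 2 * p) / (2 + p)) *
        ∑ k ∈ Finset.Ico 1 m, lam k n *
          Real.exp (-2 * (1 + lam k n) ^ (-p / (2 + p)) * T * w n ^ (2 * p / (2 + p)))
      := by
    apply mul_nonneg hP0
    apply Finset.sum_nonneg
    intro k hk
    rw [Finset.mem_Ico] at hk
    exact mul_nonneg (hlam n k hk.1 (lt_of_lt_of_le hk.2 hmn)).1 (Real.exp_pos _).le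
  have hf0' : (0:ℝ) ≤ (n:ℝ) * w n ^ ((4 * α + 2 * p) / (2 + p)) *
        ∑ k ∈ Finset.Ico m n, lam k n *
          Real.exp (-2 * (1 + lam k n) ^ (-p / (2 + p)) * T * w n ^ (2 * p / (2 + p)))
      := by
    apply mul_nonneg hP0
    apply Finset.sum_nonneg
    intro k hk
    rw [Finset.mem_Ico] at hk
    exact mul_nonneg (hlam n k (le_trans hm1 hk.1) hk.2).1 (Real.exp_pos _).le
  rw [Real.norm_eq_abs, abs_of_nonneg (by linarith)]
  linarith
end
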